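/- Let p ≥ 1 and let G be an ordered graph with chromatic number at least k ≥ 2, where edges (u1,v1), (u2,v2) are conflicting if |u1 - u2| ≥ p (left endpoints differ by at least p). Then G contains a set of ⌈(k-1)/p⌉ pairwise conflicting edges, i.e., ⌈(k-1)/p⌉ edges whose left endpoints are pairwise at distance at least p. -/

import Mathlib

private lemma stmt12_aux (p : ℕ) (hp : 1 ≤ p) :
    ∀ m : ℕ, ∀ G : SimpleGraph ℤ, G.edgeSet.Finite →
    ((m * p + 1 : ℕ) : ℕ∞) < G.chromaticNumber →
    ∃ S : Finset (ℤ × ℤ), S.card = m + 1 ∧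
      (∀ e ∈ S, e.1 < e.2 ∧ G.Adj e.1 e.2) ∧
      ∀ e1 ∈ S, ∀ e2 ∈ S, e1 ≠ e2 → (p : ℤ) ≤ |e1.1 - e2.1| := by
  intro m
  induction m with
  | zero =>
    intro G hfin hchi
    -- χ > 1, so there is an edge
    have hedge : ∃ a b : ℤ, a < b ∧ G.Adj a b := by
      by_contra h
      push_neg at h
      have hnoadj : ∀ a b : ℤ, ¬ G.Adj a b := by
        intro a b hab
        rcases lt_trichotomy a b with h1 | h1 | h1
        · exact h a b h1 hab
        · exact G.loopless.irrefl a (h1 ▸ hab)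
        · exact h b a h1 hab.symm
      have hcol : G.Colorable 1 := by
        refine ⟨SimpleGraph.Coloring.mk (fun _ => (0 : Fin 1)) ?_⟩
        intro a b hab
        exact absurd hab (hnoadj a b)
      have := hcol.chromaticNumber_le
      simp only [Nat.zero_mul, Nat.zero_add] at hchi
      exact absurd (lt_of_lt_of_le hchi this) (by norm_num)
    obtain ⟨a, b, hab, hadj⟩ := hedge
    refine ⟨{(a, b)}, by simp, ?_, ?_⟩
    · intro e he
      simp only [Finset.mem_singleton] at he
      subst he; exact ⟨hab, hadj⟩
    · intro e1 he1 e2 he2 hne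
      simp only [Finset.mem_singleton] at he1 he2
      exact absurd (he1.trans he2.symm) hne
  | succ m ih =>
    intro G hfin hchi
    -- set of ordered edges
    set P : Set (ℤ × ℤ) := {e | e.1 < e.2 ∧ G.Adj e.1 e.2} with hP
    have hPfin : P.Finite := by
      apply Set.Finite.of_finite_image (f := fun e => s(e.1, e.2))
      · apply hfin.subset
        rintro x ⟨e, he, rfl⟩
        exact he.2
      · rintro ⟨a, b⟩ ⟨hab, -⟩ ⟨c, d⟩ ⟨hcd, -⟩ h
        simp only [Sym2.eq, Sym2.rel_iff', Prod.mk.injEq, Prod.swap_prod_mk] at h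
        rcases h with ⟨rfl, rfl⟩ | ⟨rfl, rfl⟩
        · rfl
        · exact absurd (hab.trans hcd) (lt_irrefl _)
    have hLfin : (Prod.fst '' P).Finite := hPfin.image _
    -- there is an edge (since χ > m*p+1 ≥ 1)
    have hedge : ∃ a b : ℤ, a < b ∧ G.Adj a b := by
      by_contra h
      push_neg at h
      have hnoadj : ∀ a b : ℤ, ¬ G.Adj a b := by
        intro a b hab
        rcases lt_trichotomy a b with h1 | h1 | h1
        · exact h a b h1 hab
        · exact G.loopless.irrefl a (h1 ▸ hab)
        · exact h b a h1 hab.symm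
      have hcol : G.Colorable 1 := by
        refine ⟨SimpleGraph.Coloring.mk (fun _ => (0 : Fin 1)) ?_⟩
        intro a b hab
        exact absurd hab (hnoadj a b)
      have h1 := hcol.chromaticNumber_le
      have h2 : ((1 : ℕ) : ℕ∞) ≤ (((m + 1) * p + 1 : ℕ) : ℕ∞) := by
        exact_mod_cast Nat.le_add_left 1 _
      exact absurd (lt_of_le_of_lt h2 hchi) (not_lt.mpr h1)
    have hLne : (Prod.fst '' P).Nonempty := by
      obtain ⟨a, b, hab, hadj⟩ := hedge
      exact ⟨a, ⟨(a, b), ⟨hab, hadj⟩, rfl⟩⟩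
    -- minimum left endpoint
    set u := hLfin.toFinset.min' (by simpa using hLne) with hu
    have humem : u ∈ Prod.fst '' P := by
      have := hLfin.toFinset.min'_mem (by simpa using hLne)
      simpa using this
    have humin : ∀ a ∈ Prod.fst '' P, u ≤ a := by
      intro a ha
      exact hLfin.toFinset.min'_le a (by simpa using ha)
    -- every endpoint of an edge is ≥ u
    have hendpt : ∀ a b : ℤ, G.Adj a b → u ≤ a := by
      intro a b hadj
      rcases lt_trichotomy a b with h1 | h1 | h1
      · exact humin a ⟨(a, b), ⟨h1, hadj⟩, rfl⟩
      · exact absurd (h1 ▸ hadj) (G.loopless.irrefl a)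
      · exact le_trans (humin b ⟨(b, a), ⟨h1, hadj.symm⟩, rfl⟩) h1.le
    -- subgraph with all endpoints ≥ u + p
    set G' : SimpleGraph ℤ :=
      { Adj := fun a b => G.Adj a b ∧ u + p ≤ a ∧ u + p ≤ b
        symm := ⟨fun a b ⟨h1, h2, h3⟩ => ⟨h1.symm, h3, h2⟩⟩
        loopless := ⟨fun a ⟨h1, _, _⟩ => G.loopless.irrefl a h1⟩ } with hG'
    have hG'sub : G'.edgeSet ⊆ G.edgeSet := by
      intro e
      induction e using Sym2.ind with
      | _ a b => exact fun h => h.1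
    have hG'fin : G'.edgeSet.Finite := hfin.subset hG'sub
    -- if G' colorable with m*p+1 colors, G colorable with (m+1)*p+1 colors
    have hstep : G'.Colorable (m * p + 1) → G.Colorable ((m + 1) * p + 1) := by
      rintro ⟨C⟩
      have hcol2 : G.Coloring (Fin (m * p + 1) ⊕ Fin p) := by
        refine SimpleGraph.Coloring.mk
          (fun v => if h : u ≤ v ∧ v < u + p then
              Sum.inr ⟨(v - u).toNat, by omega⟩ else Sum.inl (C v)) ?_
        intro a b hadj
        have hane : a ≠ b := hadj.ne
        have ha : u ≤ a := hendpt a b hadj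
        have hb : u ≤ b := hendpt b a hadj.symm
        by_cases h1 : u ≤ a ∧ a < u + (p : ℤ) <;>
          by_cases h2 : u ≤ b ∧ b < u + (p : ℤ)
        · rw [dif_pos h1, dif_pos h2]
          simp only [ne_eq, Sum.inr.injEq, Fin.mk.injEq]
          omega
        · rw [dif_pos h1, dif_neg h2]; simp
        · rw [dif_neg h1, dif_pos h2]; simp
        · rw [dif_neg h1, dif_neg h2]
          simp only [ne_eq, Sum.inl.injEq]
          exact C.valid ⟨hadj, by omega, by omega⟩
      have := hcol2.colorable
      have hcard : Fintype.card (Fin (m * p + 1) ⊕ Fin p) = (m + 1) * p + 1 := by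
        simp [Fintype.card_sum]; ring
      rwa [hcard] at this
    -- χ(G') > m*p+1
    have hchi' : ((m * p + 1 : ℕ) : ℕ∞) < G'.chromaticNumber := by
      by_contra h
      push_neg at h
      have hcol' : G'.Colorable (m * p + 1) :=
        SimpleGraph.chromaticNumber_le_iff_colorable.mp h
      have := (hstep hcol').chromaticNumber_le
      exact absurd hchi (not_lt.mpr this)
    obtain ⟨S', hcard', hedges', hdist'⟩ := ih G' hG'fin hchi'
    -- the minimal edge
    obtain ⟨⟨a0, b0⟩, ⟨hab0, hadj0⟩, ha0⟩ := humem
    simp only at ha0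
    subst ha0
    -- left endpoints of S' edges are ≥ u + p
    have hS'left : ∀ e ∈ S', u + (p : ℤ) ≤ e.1 := by
      intro e he
      exact ((hedges' e he).2).2.1
    have hnotmem : (u, b0) ∉ S' := by
      intro hmem
      have := hS'left _ hmem
      simp only at this
      omega
    refine ⟨insert (u, b0) S', ?_, ?_, ?_⟩
    · rw [Finset.card_insert_of_notMem hnotmem, hcard']
    · intro e he
      rcases Finset.mem_insert.mp he with rfl | he'
      · exact ⟨hab0, hadj0⟩
      · exact ⟨(hedges' e he').1, ((hedges' e he').2).1⟩
    · intro e1 he1 e2 he2 hne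
      rcases Finset.mem_insert.mp he1 with rfl | he1' <;>
        rcases Finset.mem_insert.mp he2 with rfl | he2'
      · exact absurd rfl hne
      · have := hS'left e2 he2'
        simp only
        rw [abs_sub_comm]
        rw [abs_of_nonneg (by omega)]
        omega
      · have := hS'left e1 he1'
        simp only
        rw [abs_of_nonneg (by omega)]
        omega
      · exact hdist' e1 he1' e2 he2' hne

/-- For `p ≥ 1` and `k ≥ 2`, any finite ordered graph with chromatic number at least
`k` contains `⌈(k-1)/p⌉` edges whose left endpoints are pairwise at distance at
least `p`. -/
theorem stmt12 (p k : ℕ) (hp : 1 ≤ p) (hk : 2 ≤ k)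
    (G : SimpleGraph ℤ) (hfin : G.edgeSet.Finite)
    (hchi : (k : ℕ∞) ≤ G.chromaticNumber) :
    ∃ S : Finset (ℤ × ℤ), S.card = (k + p - 2) / p ∧
      (∀ e ∈ S, e.1 < e.2 ∧ G.Adj e.1 e.2) ∧
      ∀ e1 ∈ S, ∀ e2 ∈ S, e1 ≠ e2 → (p : ℤ) ≤ |e1.1 - e2.1| := by
  set q := (k + p - 2) / p with hq
  have hq1 : 1 ≤ q := by
    rw [hq, Nat.le_div_iff_mul_le hp]
    omega
  set m := q - 1 with hm
  have hm1 : m + 1 = q := by omega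
  have hqp : q * p ≤ k + p - 2 := Nat.div_mul_le_self _ _
  have hkey : m * p + 1 < k := by
    have h2 : m * p + p = q * p := by
      rw [← hm1]; ring
    have h3 : m * p + p ≤ k + p - 2 := h2 ▸ hqp
    omega
  have hlt : ((m * p + 1 : ℕ) : ℕ∞) < G.chromaticNumber := by
    refine lt_of_lt_of_le ?_ hchi
    exact_mod_cast hkey
  obtain ⟨S, hcard, h1, h2⟩ := stmt12_aux p hp m G hfin hlt
  exact ⟨S, by rw [hcard, hm1], h1, h2⟩
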